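/- Let P satisfy Assumption (A) with constants ρ ∈ (0,1), C0 < ∞ and function V. Then there exists a constant C1 ∈ (0,∞) such that for every k ≥ 1 and every n with a_k ≤ n < a_{k+1}, ⦀L^(n) − π⦀_V ≤ C1 ρ^{n−a_k} ⦀L^(a_k) − π⦀_V, where L^(n) and L^(a_k) are viewed as transition kernels x ↦ L^(n)(x,·). -/

import Mathlib

open MeasureTheory Filter ProbabilityTheory
open scoped ENNReal

namespace BetweenResamplingBound

variable {X : Type*} [MeasurableSpace X]

/-- `iter P n` is the `n`-step transition kernel `P^n`. -/
noncomputable def iter (P : X → Measure X) : ℕ → X → Measure X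
  | 0 => fun x => Measure.dirac x
  | n + 1 => fun x => (iter P n x).bind P

lemma measurable_iter (P : X → Measure X) (hP : Measurable P) (n : ℕ) :
    Measurable (iter P n) := by
  induction n with
  | zero => simpa [iter] using Measure.measurable_dirac
  | succ n ih => exact (Measure.measurable_bind' hP).comp ih

lemma isProb_bind (μ : Measure X) [IsProbabilityMeasure μ] {κ : X → Measure X}
    (hκ : Measurable κ) (h : ∀ x, IsProbabilityMeasure (κ x)) :
    IsProbabilityMeasure (μ.bind κ) := by
  constructor
  rw [Measure.bind_apply MeasurableSet.univ hκ.aemeasurable]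
  have : ∀ a, κ a Set.univ = 1 := fun a => (h a).measure_univ
  simp [this]

lemma isProb_iter (P : X → Measure X) (hP : Measurable P)
    (hPp : ∀ x, IsProbabilityMeasure (P x)) (n : ℕ) (x : X) :
    IsProbabilityMeasure (iter P n x) := by
  induction n with
  | zero => simpa [iter] using Measure.dirac.isProbabilityMeasure
  | succ n ih =>
    haveI := ih
    exact isProb_bind (iter P n x) hP hPp

lemma integral_bind' (μ : Measure X) [IsProbabilityMeasure μ] {κ : X → Measure X}
    (hκ : Measurable κ) (hκp : ∀ x, IsProbabilityMeasure (κ x)) (f : X → ℝ)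
    (hf : Measurable f)
    (hfin : ∫⁻ x, ∫⁻ y, ENNReal.ofReal |f y| ∂(κ x) ∂μ ≠ ∞) :
    ∫ y, f y ∂(μ.bind κ) = ∫ x, ∫ y, f y ∂(κ x) ∂μ := by
  set K : Kernel X X := ⟨κ, hκ⟩ with hK
  haveI : IsMarkovKernel K := ⟨fun a => hκp a⟩
  have hbk : μ.bind κ = (μ ⊗ₘ K).map Prod.snd := by
    ext s hs
    rw [Measure.bind_apply hs hκ.aemeasurable, Measure.map_apply measurable_snd hs,
      Measure.compProd_apply (measurable_snd hs)]
    rfl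
  have hmeas : Measurable fun p : X × X => f p.2 := hf.comp measurable_snd
  have hint : Integrable (fun p : X × X => f p.2) (μ ⊗ₘ K) := by
    refine ⟨hmeas.aestronglyMeasurable, ?_⟩
    rw [hasFiniteIntegral_iff_norm, Measure.lintegral_compProd
      (by exact ENNReal.measurable_ofReal.comp (hf.norm.comp measurable_snd))]
    simp only [Real.norm_eq_abs]
    exact lt_of_le_of_lt (le_of_eq rfl) hfin.lt_top
  rw [hbk, integral_map measurable_snd.aemeasurable
    hf.stronglyMeasurable.aestronglyMeasurable, Measure.integral_compProd hint]
  rfl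

lemma lintegral_ofReal_le_of_trunc {μ : Measure X} [IsFiniteMeasure μ] {V : X → ℝ}
    (hV : Measurable V) (hV0 : ∀ x, 0 ≤ V x) {K : ℝ}
    (h : ∀ N : ℕ, ∫ y, min (V y) (N : ℝ) ∂μ ≤ K) :
    ∫⁻ y, ENNReal.ofReal (V y) ∂μ ≤ ENNReal.ofReal K := by
  have hmeas : ∀ N : ℕ, Measurable fun y => ENNReal.ofReal (min (V y) (N : ℝ)) :=
    fun N => (hV.min measurable_const).ennreal_ofReal
  have hmono : Monotone fun (N : ℕ) (y : X) => ENNReal.ofReal (min (V y) (N : ℝ)) := by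
    intro M N hMN y
    exact ENNReal.ofReal_le_ofReal (min_le_min le_rfl (by exact_mod_cast hMN))
  have hsup : ∀ y, (⨆ N : ℕ, ENNReal.ofReal (min (V y) (N : ℝ))) = ENNReal.ofReal (V y) := by
    intro y
    apply le_antisymm
    · exact iSup_le fun N => ENNReal.ofReal_le_ofReal (min_le_left _ _)
    · refine le_iSup_of_le ⌈V y⌉₊ (ENNReal.ofReal_le_ofReal ?_)
      rw [min_eq_left (Nat.le_ceil _)]
  have hint : ∀ N : ℕ, Integrable (fun y => min (V y) (N : ℝ)) μ := by
    intro N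
    refine Integrable.mono' (integrable_const (N : ℝ))
      (hV.min measurable_const).aestronglyMeasurable (ae_of_all _ fun y => ?_)
    rw [Real.norm_eq_abs, abs_of_nonneg (le_min (hV0 y) (Nat.cast_nonneg N))]
    exact min_le_right _ _
  calc ∫⁻ y, ENNReal.ofReal (V y) ∂μ
      = ∫⁻ y, ⨆ N : ℕ, ENNReal.ofReal (min (V y) (N : ℝ)) ∂μ := by simp_rw [hsup]
    _ = ⨆ N : ℕ, ∫⁻ y, ENNReal.ofReal (min (V y) (N : ℝ)) ∂μ := lintegral_iSup hmeas hmono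
    _ ≤ ENNReal.ofReal K := by
        refine iSup_le fun N => ?_
        rw [← ofReal_integral_eq_lintegral_ofReal (hint N)
          (ae_of_all _ fun y => le_min (hV0 y) (Nat.cast_nonneg N))]
        exact ENNReal.ofReal_le_ofReal (h N)

lemma integrable_of_dom {μ : Measure X} {W g : X → ℝ} (hg : Measurable g)
    (hle : ∀ y, |g y| ≤ W y) (hfin : ∫⁻ y, ENNReal.ofReal (W y) ∂μ ≠ ∞) :
    Integrable g μ := by
  refine ⟨hg.aestronglyMeasurable, ?_⟩
  rw [hasFiniteIntegral_iff_norm]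
  refine lt_of_le_of_lt (lintegral_mono fun y => ?_) hfin.lt_top
  rw [Real.norm_eq_abs]
  exact ENNReal.ofReal_le_ofReal (hle y)

/-- Under Assumption (A) there is a constant `C1 ∈ (0,∞)` such that for every
`k ≥ 1` and every `n` with `a_k ≤ n < a_{k+1}`,
`⦀L^(n) − π⦀_V ≤ C1 ρ^{n−a_k} ⦀L^(a_k) − π⦀_V`.
The `V`-norms are expressed by testing against all measurable `f` with `|f|_V ≤ 1`: `B` is any
upper bound for `⦀L^(a_k) − π⦀_V`. -/
theorem vnorm_bound_between_resampling_times
    (P : X → Measure X) (hPmeas : Measurable P)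
    (hPprob : ∀ x, IsProbabilityMeasure (P x))
    (π : Measure X) (hπ : IsProbabilityMeasure π) (hinv : π.bind P = π)
    (V : X → ℝ) (hVmeas : Measurable V) (hV1 : ∀ x, 1 ≤ V x)
    (ρ C0 : ℝ) (hρ0 : 0 < ρ) (hρ1 : ρ < 1) (hC0 : 0 ≤ C0)
    -- Assumption (A): `⦀P^n − π⦀_V ≤ C0 ρ^n` for all `n ≥ 0`
    (hA : ∀ f : X → ℝ, Measurable f → (∀ x, |f x| ≤ V x) →
      ∀ (n : ℕ) (x : X),
        |∫ y, f y ∂(iter P n x) - ∫ y, f y ∂π| ≤ C0 * ρ ^ n * V x)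
    -- the resampling schedule: a strictly increasing sequence of positive integers
    (a : ℕ → ℕ) (ha1 : 1 ≤ a 1) (hamono : ∀ k, 1 ≤ k → a k < a (k + 1))
    -- the laws `L^(n)(x,·)` of the chain with resampling from the past, burn-in 0
    (L : ℕ → X → Measure X)
    (hL0 : ∀ x, L 0 x = Measure.dirac x)
    (hLstep : ∀ n : ℕ, 1 ≤ n → (¬ ∃ k, 1 ≤ k ∧ a k = n) →
      ∀ x, L n x = (L (n - 1) x).bind P)
    (hLres : ∀ k, 1 ≤ k →
      ∀ x, L (a k) x = ((a k : ℝ≥0∞))⁻¹ • ∑ j ∈ Finset.range (a k), L j x) :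
    ∃ C1 : ℝ, 0 < C1 ∧
      ∀ k n : ℕ, 1 ≤ k → a k ≤ n → n < a (k + 1) →
        ∀ B : ℝ,
          -- `⦀L^(a_k) − π⦀_V ≤ B`
          (∀ f : X → ℝ, Measurable f → (∀ x, |f x| ≤ V x) →
            ∀ x, |∫ y, f y ∂(L (a k) x) - ∫ y, f y ∂π| ≤ B * V x) →
          -- conclusion: `⦀L^(n) − π⦀_V ≤ C1 ρ^{n−a_k} B`
          ∀ f : X → ℝ, Measurable f → (∀ x, |f x| ≤ V x) →
            ∀ x, |∫ y, f y ∂(L n x) - ∫ y, f y ∂π| ≤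
              C1 * ρ ^ (n - a k) * B * V x := by
  haveI := hπ
  refine ⟨C0 + 1, by linarith, ?_⟩
  intro k n hk hkn hn B hB f hf hfV x
  set m := n - a k with hm
  -- monotonicity of the schedule
  have hamono2 : ∀ i j : ℕ, 1 ≤ i → i ≤ j → a i ≤ a j := by
    intro i j hi hij
    induction j, hij using Nat.le_induction with
    | base => exact le_rfl
    | succ j hij ih => exact le_trans ih (le_of_lt (hamono j (le_trans hi hij)))
  -- all the laws are probability measures
  have probL : ∀ n (x : X), IsProbabilityMeasure (L n x) := by
    intro n
    induction n using Nat.strong_induction_on with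
    | _ n ih =>
      intro x
      rcases Nat.eq_zero_or_pos n with h0 | hpos
      · subst h0; rw [hL0]; infer_instance
      · by_cases hres : ∃ j, 1 ≤ j ∧ a j = n
        · obtain ⟨j, hj, haj⟩ := hres
          constructor
          rw [← haj, hLres j hj x, Measure.smul_apply, Measure.finset_sum_apply]
          have hs : ∀ i ∈ Finset.range (a j), L i x Set.univ = 1 := by
            intro i hi
            have hilt : i < n := haj ▸ Finset.mem_range.mp hi
            haveI := ih i hilt x
            exact measure_univ
          rw [Finset.sum_congr rfl hs, Finset.sum_const, Finset.card_range, nsmul_eq_mul,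
            mul_one, smul_eq_mul]
          refine ENNReal.inv_mul_cancel ?_ (by simp)
          exact_mod_cast Nat.cast_ne_zero.mpr (by omega)
        · haveI := ih (n - 1) (Nat.sub_lt hpos one_pos) x
          rw [hLstep n hpos hres x]
          exact isProb_bind _ hPmeas hPprob
  haveI hμkP : IsProbabilityMeasure (L (a k) x) := probL (a k) x
  -- the law at time n is the law at time a_k pushed through m steps of the chain
  have hwin : L n x = (L (a k) x).bind (iter P m) := by
    have main : ∀ n', a k ≤ n' → n' < a (k + 1) →
        L n' x = (L (a k) x).bind (iter P (n' - a k)) := by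
      intro n' hn'
      induction n', hn' using Nat.le_induction with
      | base =>
        intro _
        rw [Nat.sub_self]
        exact Measure.bind_dirac.symm
      | succ n' hn' ih =>
        intro hlt
        have hlt' : n' < a (k + 1) := by omega
        have hnres : ¬ ∃ j, 1 ≤ j ∧ a j = n' + 1 := by
          rintro ⟨j, hj, haj⟩
          rcases le_or_gt j k with hjk | hjk
          · have := hamono2 j k hj hjk; omega
          · have := hamono2 (k + 1) j (by omega) hjk; omega
        rw [hLstep (n' + 1) (by omega) hnres x]
        simp only [Nat.add_sub_cancel]
        rw [ih hlt',
          Measure.bind_bind (measurable_iter P hPmeas _).aemeasurable hPmeas.aemeasurable]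
        have h1 : n' + 1 - a k = (n' - a k) + 1 := by omega
        rw [h1]
        rfl
    exact main n hkn hn
  -- invariance of π under the iterated kernel
  have hπiter : ∀ j : ℕ, π.bind (iter P j) = π := by
    intro j
    induction j with
    | zero => exact Measure.bind_dirac
    | succ j ih =>
      have hb : π.bind (iter P (j + 1)) = (π.bind (iter P j)).bind P :=
        (Measure.bind_bind (measurable_iter P hPmeas j).aemeasurable hPmeas.aemeasurable).symm
      rw [hb, ih, hinv]
  have hV0 : ∀ y, (0 : ℝ) ≤ V y := fun y => le_trans zero_le_one (hV1 y)
  have hVx : (0 : ℝ) < V x := lt_of_lt_of_le one_pos (hV1 x)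
  have hρm1 : ρ ^ m ≤ 1 := pow_le_one₀ hρ0.le hρ1.le
  have hρm0 : (0 : ℝ) < ρ ^ m := pow_pos hρ0 m
  have hminle : ∀ (N : ℕ) (y : X), |min (V y) (N : ℝ)| ≤ V y := by
    intro N y
    rw [abs_of_nonneg (le_min (hV0 y) (Nat.cast_nonneg N))]
    exact min_le_left _ _
  have hminmeas : ∀ N : ℕ, Measurable fun y => min (V y) (N : ℝ) :=
    fun N => hVmeas.min measurable_const
  -- truncation bound for π
  have hπtr : ∀ N : ℕ, ∫ y, min (V y) (N : ℝ) ∂π ≤ (1 + C0) * V x := by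
    intro N
    have h0 := hA (fun y => min (V y) (N : ℝ)) (hminmeas N) (hminle N) 0 x
    have hd : ∫ y, min (V y) (N : ℝ) ∂(iter P 0 x) = min (V x) (N : ℝ) := by
      have hdd : iter P 0 x = Measure.dirac x := rfl
      rw [hdd, integral_dirac' _ x ((hminmeas N).stronglyMeasurable)]
    rw [hd, pow_zero, mul_one] at h0
    have h1 := abs_le.mp h0
    have h2 : min (V x) (N : ℝ) ≤ V x := min_le_left _ _
    linarith [h1.1, h1.2]
  have hπlin : ∫⁻ y, ENNReal.ofReal (V y) ∂π ≤ ENNReal.ofReal ((1 + C0) * V x) :=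
    lintegral_ofReal_le_of_trunc hVmeas hV0 hπtr
  -- truncation bound for L^(a_k)(x,·)
  have hμtr : ∀ N : ℕ, ∫ y, min (V y) (N : ℝ) ∂(L (a k) x) ≤ (1 + C0 + B) * V x := by
    intro N
    have h0 := hB (fun y => min (V y) (N : ℝ)) (hminmeas N) (hminle N) x
    have h1 := abs_le.mp h0
    have h2 := hπtr N
    linarith [h1.1, h1.2]
  have hμlin : ∫⁻ y, ENNReal.ofReal (V y) ∂(L (a k) x) ≤ ENNReal.ofReal ((1 + C0 + B) * V x) :=
    lintegral_ofReal_le_of_trunc hVmeas hV0 hμtr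
  -- truncation bound for the iterated kernel
  have hiterlin : ∀ y, ∫⁻ z, ENNReal.ofReal (V z) ∂(iter P m y) ≤
      ENNReal.ofReal ((1 + C0) * V x + C0 * V y) := by
    intro y
    haveI := isProb_iter P hPmeas hPprob m y
    refine lintegral_ofReal_le_of_trunc hVmeas hV0 ?_
    intro N
    have h0 := hA (fun z => min (V z) (N : ℝ)) (hminmeas N) (hminle N) m y
    have h1 := abs_le.mp h0
    have h2 := hπtr N
    have h3 : C0 * ρ ^ m * V y ≤ C0 * V y := by nlinarith [hV0 y]
    linarith [h1.1, h1.2]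
  -- finiteness of the double lintegral needed for the Fubini-type swaps
  have key : ∀ (ν : Measure X), IsProbabilityMeasure ν → ∀ Kν : ℝ,
      (∫⁻ y, ENNReal.ofReal (V y) ∂ν ≤ ENNReal.ofReal Kν) →
      ∫⁻ y, ∫⁻ z, ENNReal.ofReal |f z| ∂(iter P m y) ∂ν ≠ ∞ := by
    intro ν hν Kν hK
    haveI := hν
    have h1 : ∫⁻ y, ∫⁻ z, ENNReal.ofReal |f z| ∂(iter P m y) ∂ν
        ≤ ∫⁻ y, (ENNReal.ofReal ((1 + C0) * V x) +
            ENNReal.ofReal C0 * ENNReal.ofReal (V y)) ∂ν := by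
      refine lintegral_mono fun y => ?_
      refine le_trans (le_trans
        (lintegral_mono fun z => ENNReal.ofReal_le_ofReal (hfV z)) (hiterlin y)) ?_
      rw [← ENNReal.ofReal_mul hC0]
      exact ENNReal.ofReal_add_le
    rw [lintegral_add_left measurable_const, lintegral_const,
      lintegral_const_mul _ hVmeas.ennreal_ofReal] at h1
    refine ne_of_lt (lt_of_le_of_lt h1 ?_)
    refine ENNReal.add_lt_top.mpr ⟨?_, ?_⟩
    · exact ENNReal.mul_lt_top ENNReal.ofReal_lt_top (by simp [measure_univ])
    · exact ENNReal.mul_lt_top ENNReal.ofReal_lt_top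
        (lt_of_le_of_lt hK ENNReal.ofReal_lt_top)
  have hKm : Measurable (iter P m) := measurable_iter P hPmeas m
  have hiterp : ∀ y, IsProbabilityMeasure (iter P m y) := isProb_iter P hPmeas hPprob m
  -- the function g
  have hgs : StronglyMeasurable (fun y => ∫ z, f z ∂(iter P m y)) := by
    have hK : IsMarkovKernel (⟨iter P m, hKm⟩ : Kernel X X) := ⟨fun y => hiterp y⟩
    exact (hf.stronglyMeasurable.comp_measurable
      (measurable_snd : Measurable fun p : X × X => p.2)).integral_kernel_prod_right'
      (κ := (⟨iter P m, hKm⟩ : Kernel X X))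
  -- Fubini swaps
  have key1 : ∫ y, f y ∂(L n x) = ∫ y, ∫ z, f z ∂(iter P m y) ∂(L (a k) x) := by
    rw [hwin]
    exact integral_bind' (L (a k) x) hKm hiterp f hf
      (key (L (a k) x) hμkP ((1 + C0 + B) * V x) hμlin)
  have key2 : ∫ y, ∫ z, f z ∂(iter P m y) ∂π = ∫ y, f y ∂π := by
    conv_rhs => rw [← hπiter m]
    exact (integral_bind' π hKm hiterp f hf (key π hπ ((1 + C0) * V x) hπlin)).symm
  set c := ∫ y, f y ∂π with hc
  set D := (C0 + 1) * ρ ^ m with hD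
  have hD0 : (0 : ℝ) < D := mul_pos (by linarith) hρm0
  have hgc : ∀ y, |(∫ z, f z ∂(iter P m y)) - c| ≤ D * V y := by
    intro y
    have h0 := hA f hf hfV m y
    have h2 : C0 * ρ ^ m * V y ≤ D * V y := by
      have : C0 * ρ ^ m ≤ (C0 + 1) * ρ ^ m := by nlinarith
      nlinarith [hV0 y]
    exact le_trans h0 h2
  -- integrability of g - c
  have hWfin : ∀ (ν : Measure X), IsProbabilityMeasure ν → ∀ Kν : ℝ,
      (∫⁻ y, ENNReal.ofReal (V y) ∂ν ≤ ENNReal.ofReal Kν) →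
      ∫⁻ y, ENNReal.ofReal (D * V y) ∂ν ≠ ∞ := by
    intro ν hν Kν hK
    haveI := hν
    have : ∫⁻ y, ENNReal.ofReal (D * V y) ∂ν
        = ENNReal.ofReal D * ∫⁻ y, ENNReal.ofReal (V y) ∂ν := by
      simp_rw [ENNReal.ofReal_mul hD0.le]
      exact lintegral_const_mul _ hVmeas.ennreal_ofReal
    rw [this]
    exact ne_of_lt (ENNReal.mul_lt_top ENNReal.ofReal_lt_top
      (lt_of_le_of_lt hK ENNReal.ofReal_lt_top))
  have hgcint_μ : Integrable (fun y => (∫ z, f z ∂(iter P m y)) - c) (L (a k) x) :=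
    integrable_of_dom (hgs.measurable.sub measurable_const) hgc
      (hWfin (L (a k) x) hμkP ((1 + C0 + B) * V x) hμlin)
  have hgcint_π : Integrable (fun y => (∫ z, f z ∂(iter P m y)) - c) π :=
    integrable_of_dom (hgs.measurable.sub measurable_const) hgc
      (hWfin π hπ ((1 + C0) * V x) hπlin)
  -- the test function h
  have hhmeas : Measurable fun y => D⁻¹ * ((∫ z, f z ∂(iter P m y)) - c) :=
    measurable_const.mul (hgs.measurable.sub measurable_const)
  have hhle : ∀ y, |D⁻¹ * ((∫ z, f z ∂(iter P m y)) - c)| ≤ V y := by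
    intro y
    rw [abs_mul, abs_of_nonneg (inv_nonneg.mpr hD0.le)]
    calc D⁻¹ * |(∫ z, f z ∂(iter P m y)) - c| ≤ D⁻¹ * (D * V y) :=
          mul_le_mul_of_nonneg_left (hgc y) (inv_nonneg.mpr hD0.le)
      _ = V y := by field_simp
  have hfinal := hB _ hhmeas hhle x
  -- compute the two integrals of h
  have hintμ : ∫ y, D⁻¹ * ((∫ z, f z ∂(iter P m y)) - c) ∂(L (a k) x)
      = D⁻¹ * ((∫ y, ∫ z, f z ∂(iter P m y) ∂(L (a k) x)) - c) := by
    rw [integral_const_mul, integral_sub ?hint (integrable_const c), integral_const]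
    · simp [measure_univ]
    · case hint =>
        have : Integrable (fun y => ((∫ z, f z ∂(iter P m y)) - c) + c) (L (a k) x) :=
          hgcint_μ.add (integrable_const c)
        simpa using this
  have hintπ : ∫ y, D⁻¹ * ((∫ z, f z ∂(iter P m y)) - c) ∂π = 0 := by
    rw [integral_const_mul, integral_sub ?hint2 (integrable_const c), integral_const]
    · simp [measure_univ, key2]
    · case hint2 =>
        have : Integrable (fun y => ((∫ z, f z ∂(iter P m y)) - c) + c) π :=
          hgcint_π.add (integrable_const c)
        simpa using this
  rw [hintμ, hintπ, sub_zero, abs_mul, abs_of_nonneg (inv_nonneg.mpr hD0.le)] at hfinal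
  have hS : |(∫ y, ∫ z, f z ∂(iter P m y) ∂(L (a k) x)) - c| ≤ D * (B * V x) := by
    have h' := mul_le_mul_of_nonneg_left hfinal hD0.le
    rwa [← mul_assoc, mul_inv_cancel₀ hD0.ne', one_mul] at h'
  rw [key1]
  calc |(∫ y, ∫ z, f z ∂(iter P m y) ∂(L (a k) x)) - c| ≤ D * (B * V x) := hS
    _ = (C0 + 1) * ρ ^ m * B * V x := by rw [hD]; ring

end BetweenResamplingBound
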